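/- For every regular uncountable cardinal κ, the stationary pseudo-intersection number and the stationary tower number both equal κ: there exists a family of κ many stationary subsets of κ, well-ordered by ⊇*_cl, which has the <κ-stationary intersection property but no stationary pseudo-intersection, while every family of fewer than κ stationary subsets of κ with the <κ-stationary intersection property has a stationary pseudo-intersection. -/
import Mathlib


open Set Cardinal

/-- `c` is a club in the well-ordered type `α` (thought of as the cardinal `κ = #α`):
it is closed (contains the supremum of each of its nonempty bounded subsets) and unbounded. -/
def IsClubIn {α : Type*} [LinearOrder α] (c : Set α) : Prop :=
  (∀ s ⊆ c, s.Nonempty → ∀ a : α, IsLUB s a → a ∈ c) ∧ ∀ a : α, ∃ b ∈ c, a < b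

/-- `x` is stationary: it meets every club. -/
def IsStatIn {α : Type*} [LinearOrder α] (x : Set α) : Prop :=
  ∀ c : Set α, IsClubIn c → (x ∩ c).Nonempty

/-- `x ⊆*_cl y`: `x \ y` is non-stationary. -/
def AlmostSubsetCl {α : Type*} [LinearOrder α] (x y : Set α) : Prop :=
  ¬ IsStatIn (x \ y)

/-- `z` is a stationary pseudo-intersection of the family `F`. -/
def IsStatPseudoInter {α : Type*} [LinearOrder α] (F : Set (Set α)) (z : Set α) : Prop :=
  IsStatIn z ∧ ∀ y ∈ F, AlmostSubsetCl z y

section Main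
universe u
variable {α : Type u} [LinearOrder α] [WellFoundedLT α]

/-- every nonempty bounded-above subset has a least upper bound -/
theorem exists_isLUB' {s : Set α} (hne : s.Nonempty) (hb : BddAbove s) :
    ∃ a, IsLUB s a := by
  obtain ⟨u, hu⟩ := hb
  have hne' : (upperBounds s).Nonempty := ⟨u, hu⟩
  obtain ⟨m, hm, hmin⟩ := (IsWellFounded.wf (r := (· < · : α → α → Prop))).has_min _ hne'
  refine ⟨m, hm, fun v hv => ?_⟩
  by_contra h
  exact hmin v hv (not_le.mp h)

variable (hunc : ℵ₀ < #α) (hreg : (#α).IsRegular) (hinit : ∀ a : α, #(Set.Iio a) < #α)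

include hunc hinit in
theorem mk_Iic_lt (a : α) : #(Set.Iic a) < #α := by
  have : (Set.Iic a) = insert a (Set.Iio a) := (Set.Iio_insert).symm
  rw [this]
  calc #(insert a (Set.Iio a) : Set α) ≤ #(Set.Iio a) + 1 := Cardinal.mk_insert_le
    _ < #α := Cardinal.add_lt_of_lt hunc.le (hinit a) (lt_trans one_lt_aleph0 hunc)

include hunc hreg hinit in
theorem small_bddAbove {s : Set α} (hs : #s < #α) : BddAbove s := by
  by_contra hb
  have hcov : (Set.univ : Set α) = ⋃ b : s, Set.Iic (b : α) := by
    ext x; simp only [Set.mem_univ, Set.mem_iUnion, true_iff]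
    rcases not_bddAbove_iff.mp hb x with ⟨b, hbs, hxb⟩
    exact ⟨⟨b, hbs⟩, hxb.le⟩
  have h1 : #α ≤ Cardinal.sum (fun b : s => #(Set.Iic (b : α))) := by
    calc #α = #(Set.univ : Set α) := Cardinal.mk_univ.symm
      _ = #(⋃ b : s, Set.Iic (b : α)) := by rw [hcov]
      _ ≤ _ := Cardinal.mk_iUnion_le_sum_mk
  have h2 : Cardinal.sum (fun b : s => #(Set.Iic (b : α))) < #α :=
    Cardinal.sum_lt_of_isRegular hreg hs (fun b => mk_Iic_lt hunc hinit _)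
  exact absurd h1 (not_le.mpr h2)

include hunc hinit in
theorem no_max (a : α) : ∃ b, a < b := by
  by_contra h
  push_neg at h
  have : (Set.univ : Set α) ⊆ Set.Iic a := fun x _ => h x
  have := (Cardinal.mk_le_mk_of_subset this).trans_lt (mk_Iic_lt hunc hinit a)
  rw [Cardinal.mk_univ] at this
  exact lt_irrefl _ this

include hunc hreg hinit in
theorem small_lub {s : Set α} (hne : s.Nonempty) (hs : #s < #α) : ∃ a, IsLUB s a :=
  exists_isLUB' hne (small_bddAbove hunc hreg hinit hs)

theorem clubIn_univ (hunc : ℵ₀ < #α) (hinit : ∀ a : α, #(Set.Iio a) < #α) :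
    IsClubIn (Set.univ : Set α) :=
  ⟨fun _ _ _ _ _ => trivial, fun a => by
    obtain ⟨b, hb⟩ := no_max hunc hinit a; exact ⟨b, trivial, hb⟩⟩

include hunc hinit in
theorem clubIn_Ioi (a : α) : IsClubIn (Set.Ioi a) := by
  constructor
  · rintro s hs ⟨x, hx⟩ m hm
    exact lt_of_lt_of_le (hs hx) (hm.1 hx)
  · intro b
    obtain ⟨c, hc⟩ := no_max hunc hinit (max a b)
    exact ⟨c, lt_of_le_of_lt (le_max_left a b) hc, lt_of_le_of_lt (le_max_right a b) hc⟩

theorem stat_mono {x y : Set α} (hxy : x ⊆ y) (hx : IsStatIn x) : IsStatIn y :=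
  fun c hc => ((hx c hc).mono (Set.inter_subset_inter_left _ hxy))

theorem nonstat_mono {x y : Set α} (hxy : x ⊆ y) (hy : ¬ IsStatIn y) : ¬ IsStatIn x :=
  fun hx => hy (stat_mono hxy hx)

include hunc hinit in
theorem bounded_nonstat {x : Set α} {a : α} (hx : x ⊆ Set.Iic a) : ¬ IsStatIn x := by
  intro hst
  obtain ⟨y, hy1, hy2⟩ := hst (Set.Ioi a) (clubIn_Ioi hunc hinit a)
  exact absurd (hx hy1) (not_le.mpr hy2)

include hunc hinit in
theorem stat_diff_Iic {x : Set α} (hx : IsStatIn x) (a : α) : IsStatIn (x \ Set.Iic a) := by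
  intro c hc
  -- c ∩ Ioi a is a club
  have hc' : IsClubIn (c ∩ Set.Ioi a) := by
    constructor
    · rintro s hs hne m hm
      exact ⟨hc.1 s (fun y hy => (hs hy).1) hne m hm,
        (clubIn_Ioi hunc hinit a).1 s (fun y hy => (hs hy).2) hne m hm⟩
    · intro b
      obtain ⟨d, hd, hbd⟩ := hc.2 (max a b)
      exact ⟨d, ⟨hd, lt_of_le_of_lt (le_max_left a b) hbd⟩, lt_of_le_of_lt (le_max_right a b) hbd⟩
  obtain ⟨y, hy1, hy2, hy3⟩ := hx _ hc'
  exact ⟨y, ⟨hy1, fun h => absurd hy3 (not_lt.mpr h)⟩, hy2⟩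

include hunc hreg hinit in
theorem exists_step {ι : Type u} (c : ι → Set α) (hc : ∀ i, IsClubIn (c i))
    (hι : #ι < #α) (x : α) : ∃ b, x < b ∧ ∀ i, ∃ d ∈ c i, x < d ∧ d ≤ b := by
  classical
  have hd : ∀ i, ∃ d, d ∈ c i ∧ x < d := fun i => by
    obtain ⟨d, hd1, hd2⟩ := (hc i).2 x; exact ⟨d, hd1, hd2⟩
  choose d hd1 hd2 using hd
  have hsmall : #(Set.range d) < #α := lt_of_le_of_lt Cardinal.mk_range_le hι
  obtain ⟨u, hu⟩ := small_bddAbove hunc hreg hinit hsmall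
  obtain ⟨b, hb⟩ := no_max hunc hinit (max u x)
  refine ⟨b, lt_of_le_of_lt (le_max_right u x) hb, fun i => ⟨d i, hd1 i, hd2 i, ?_⟩⟩
  exact le_of_lt (lt_of_le_of_lt (le_trans (hu ⟨i, rfl⟩) (le_max_left u x)) hb)

/-- if a club `c` contains points separating consecutive terms of a sequence
with lub `m`, then `m ∈ c`. -/
theorem lub_mem_club {c : Set α} (hc : IsClubIn c) (u : ℕ → α)
    (hsep : ∀ n, ∃ d ∈ c, u n < d ∧ d ≤ u (n + 1)) {m : α}
    (hm : IsLUB (Set.range u) m) : m ∈ c := by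
  classical
  choose v hv1 hv2 hv3 using hsep
  have hub : m ∈ upperBounds (Set.range v) := by
    rintro _ ⟨n, rfl⟩
    exact le_trans (hv3 n) (hm.1 ⟨n + 1, rfl⟩)
  have hlub : IsLUB (Set.range v) m := by
    refine ⟨hub, fun w hw => hm.2 ?_⟩
    rintro _ ⟨n, rfl⟩
    exact le_trans (le_of_lt (hv2 n)) (hw ⟨n, rfl⟩)
  exact hc.1 (Set.range v) (fun y hy => by obtain ⟨n, rfl⟩ := hy; exact hv1 n) ⟨v 0, ⟨0, rfl⟩⟩ m hlub

include hunc hreg hinit in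
theorem mk_range_nat_lt (u : ℕ → α) : #(Set.range u) < #α :=
  lt_of_le_of_lt (Set.Countable.le_aleph0 (Set.countable_range u)) hunc

include hunc hreg hinit in
theorem clubIn_iInter {ι : Type u} (c : ι → Set α) (hc : ∀ i, IsClubIn (c i))
    (hι : #ι < #α) : IsClubIn (⋂ i, c i) := by
  classical
  constructor
  · intro s hs hne m hm
    refine Set.mem_iInter.mpr fun i => ?_
    exact (hc i).1 s (fun y hy => Set.mem_iInter.mp (hs hy) i) hne m hm
  · intro a
    have hstep : ∀ x : α, ∃ b, x < b ∧ ∀ i, ∃ d ∈ c i, x < d ∧ d ≤ b :=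
      exists_step hunc hreg hinit c hc hι
    choose g hg1 hg2 using hstep
    set u : ℕ → α := fun n => g^[n] (g a) with hu
    have hsucc : ∀ n, u (n + 1) = g (u n) := fun n =>
      Function.iterate_succ_apply' g n (g a)
    have humono : ∀ n, u n < u (n + 1) := fun n => by rw [hsucc]; exact hg1 (u n)
    obtain ⟨m, hm⟩ := exists_isLUB' (s := Set.range u) ⟨u 0, ⟨0, rfl⟩⟩
      (small_bddAbove hunc hreg hinit (mk_range_nat_lt hunc hreg hinit u))
    refine ⟨m, Set.mem_iInter.mpr fun i => ?_, ?_⟩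
    · refine lub_mem_club (hc i) u (fun n => ?_) hm
      obtain ⟨d, hd1, hd2, hd3⟩ := hg2 (u n) i
      exact ⟨d, hd1, hd2, by rw [hsucc]; exact hd3⟩
    · calc a < g a := hg1 a
        _ ≤ m := hm.1 ⟨0, rfl⟩

/-- diagonal intersection -/
def diagInter (c : α → Set α) : Set α := {x | ∀ i < x, x ∈ c i}

include hunc hreg hinit in
theorem clubIn_diagInter (c : α → Set α) (hc : ∀ i, IsClubIn (c i)) :
    IsClubIn (diagInter c) := by
  classical
  constructor
  · intro s hs hne m hm
    intro i hi
    by_cases hms : m ∈ s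
    · exact hs hms i hi
    · have hne' : (s ∩ Set.Ioi i).Nonempty := by
        by_contra h
        rw [Set.not_nonempty_iff_eq_empty] at h
        have : m ≤ i := hm.2 (fun y hy => by
          by_contra hyi
          exact (Set.eq_empty_iff_forall_notMem.mp h y) ⟨hy, not_le.mp hyi⟩)
        exact absurd hi (not_lt.mpr this)
      have hsub : s ∩ Set.Ioi i ⊆ c i := fun y hy => hs hy.1 i hy.2
      have hlub : IsLUB (s ∩ Set.Ioi i) m := by
        refine ⟨fun y hy => hm.1 hy.1, fun w hw => hm.2 fun y hy => ?_⟩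
        by_cases hyi : i < y
        · exact hw ⟨hy, hyi⟩
        · obtain ⟨y0, hy0⟩ := hne'
          exact le_trans (le_trans (not_lt.mp hyi) (le_of_lt hy0.2)) (hw hy0)
      exact (hc i).1 _ hsub hne' m hlub
  · intro a
    have hstep : ∀ x : α, ∃ b, x < b ∧ ∀ i : Set.Iic x, ∃ d ∈ c i, x < d ∧ d ≤ b := by
      intro x
      exact exists_step hunc hreg hinit (fun i : Set.Iic x => c i)
        (fun i => hc i) (by
          have := Cardinal.mk_insert_le (s := Set.Iio x) (a := x)
          rw [Set.Iio_insert] at this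
          exact lt_of_le_of_lt this
            (Cardinal.add_lt_of_lt hunc.le (hinit x) (lt_trans one_lt_aleph0 hunc))) x
    choose g hg1 hg2 using hstep
    set u : ℕ → α := fun n => g^[n] (g a) with hu
    have hsucc : ∀ n, u (n + 1) = g (u n) := fun n =>
      Function.iterate_succ_apply' g n (g a)
    have humono : ∀ n, u n < u (n + 1) := fun n => by rw [hsucc]; exact hg1 (u n)
    have humono' : StrictMono u := strictMono_nat_of_lt_succ humono
    obtain ⟨m, hm⟩ := exists_isLUB' (s := Set.range u) ⟨u 0, ⟨0, rfl⟩⟩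
      (small_bddAbove hunc hreg hinit (mk_range_nat_lt hunc hreg hinit u))
    refine ⟨m, ?_, ?_⟩
    · intro i hi
      -- find n0 with i < u n0
      have hn0 : ∃ n0, i < u n0 := by
        by_contra h
        push_neg at h
        have : m ≤ i := hm.2 (by rintro _ ⟨n, rfl⟩; exact h n)
        exact absurd hi (not_lt.mpr this)
      obtain ⟨n0, hn0⟩ := hn0
      set w : ℕ → α := fun k => u (n0 + k) with hw
      have hwm : IsLUB (Set.range w) m := by
        constructor
        · rintro _ ⟨k, rfl⟩; exact hm.1 ⟨n0 + k, rfl⟩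
        · intro v hv
          refine hm.2 ?_
          rintro _ ⟨n, rfl⟩
          exact le_trans (humono'.monotone (Nat.le_add_left n n0)) (hv ⟨n, rfl⟩)
      refine lub_mem_club (hc i) w (fun k => ?_) hwm
      have hik : i ≤ u (n0 + k) := le_trans hn0.le (humono'.monotone (Nat.le_add_right n0 k))
      obtain ⟨d, hd1, hd2, hd3⟩ := hg2 (u (n0 + k)) ⟨i, hik⟩
      refine ⟨d, hd1, hd2, ?_⟩
      show d ≤ u (n0 + (k + 1))
      rw [show n0 + (k + 1) = (n0 + k) + 1 by omega, hsucc]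
      exact hd3
    · calc a < g a := hg1 a
        _ ≤ m := hm.1 ⟨0, rfl⟩
theorem nonstat_club {x : Set α} (hx : ¬ IsStatIn x) :
    ∃ c : Set α, IsClubIn c ∧ ∀ y ∈ x, y ∉ c := by
  rw [IsStatIn] at hx
  push_neg at hx
  obtain ⟨c, hc1, hc2⟩ := hx
  exact ⟨c, hc1, fun y hy hyc => Set.eq_empty_iff_forall_notMem.mp hc2 y ⟨hy, hyc⟩⟩

include hunc hreg hinit in
theorem clubIn_inter {c d : Set α} (hc : IsClubIn c) (hd : IsClubIn d) :
    IsClubIn (c ∩ d) := by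
  have h := clubIn_iInter hunc hreg hinit (ι := ULift.{u} Bool)
    (fun b => if b.down then c else d)
    (fun b => by by_cases hb : b.down <;> simp [hb, hc, hd])
    (lt_of_le_of_lt Cardinal.mk_le_aleph0 hunc)
  have he : (⋂ b : ULift.{u} Bool, if b.down then c else d) = c ∩ d := by
    ext x
    simp only [Set.mem_iInter, Set.mem_inter_iff]
    constructor
    · intro hb; exact ⟨by simpa using hb ⟨true⟩, by simpa using hb ⟨false⟩⟩
    · rintro ⟨h1, h2⟩ ⟨b⟩; cases b <;> simp [h1, h2]
  rwa [he] at h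

include hunc hreg hinit in
theorem fodor {S : Set α} (hS : IsStatIn S) (f : α → α) (hf : ∀ x ∈ S, f x < x) :
    ∃ i, IsStatIn {x ∈ S | f x = i} := by
  classical
  by_contra h
  push_neg at h
  choose c hc1 hc2 using fun i => nonstat_club (h i)
  obtain ⟨x, hxS, hxD⟩ := hS (diagInter c) (clubIn_diagInter hunc hreg hinit c hc1)
  exact hc2 (f x) x ⟨hxS, rfl⟩ (hxD (f x) (hf x hxS))

/-- the set of countable-cofinality points -/
def OmegaLim (α : Type u) [LinearOrder α] : Set α :=
  {x | ∃ u : ℕ → α, StrictMono u ∧ IsLUB (Set.range u) x}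

include hunc hreg hinit in
theorem stat_omegaLim : IsStatIn (OmegaLim α) := by
  classical
  intro c hc
  have : Nonempty α := by
    by_contra hne
    rw [not_nonempty_iff] at hne
    rw [Cardinal.mk_eq_zero α] at hunc
    exact absurd hunc (by simp [not_lt])
  obtain ⟨a0⟩ := this
  have hg : ∀ x : α, ∃ b, b ∈ c ∧ x < b := by
    intro x; obtain ⟨b, hb1, hb2⟩ := hc.2 x; exact ⟨b, hb1, hb2⟩
  choose g hg1 hg2 using hg
  set u : ℕ → α := fun n => g^[n] (g a0) with hu
  have hsucc : ∀ n, u (n + 1) = g (u n) := fun n => Function.iterate_succ_apply' g n (g a0)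
  have humem : ∀ n, u n ∈ c := by
    intro n
    cases n with
    | zero => exact hg1 a0
    | succ k => rw [hsucc]; exact hg1 (u k)
  have humono : StrictMono u := strictMono_nat_of_lt_succ fun n => by
    rw [hsucc]; exact hg2 (u n)
  obtain ⟨m, hm⟩ := exists_isLUB' (s := Set.range u) ⟨u 0, ⟨0, rfl⟩⟩
    (small_bddAbove hunc hreg hinit (mk_range_nat_lt hunc hreg hinit u))
  refine ⟨m, ⟨u, humono, hm⟩, ?_⟩
  exact hc.1 (Set.range u) (by rintro _ ⟨n, rfl⟩; exact humem n) ⟨u 0, ⟨0, rfl⟩⟩ m hm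

include hunc hreg hinit in
theorem solovay : ∃ S : α → Set α, (∀ i, IsStatIn (S i)) ∧
    ∀ i j, i ≠ j → ∀ x, x ∈ S i → x ∉ S j := by
  classical
  -- choose witnessing sequences
  have hF : ∀ x : α, x ∈ OmegaLim α → ∃ u : ℕ → α, StrictMono u ∧ IsLUB (Set.range u) x :=
    fun x hx => hx
  set F : α → ℕ → α := fun x =>
    if h : x ∈ OmegaLim α then Classical.choose h else fun _ => x with hFdef
  have hFs : ∀ x (hx : x ∈ OmegaLim α), StrictMono (F x) ∧ IsLUB (Set.range (F x)) x := by
    intro x hx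
    simp only [hFdef, dif_pos hx]
    exact Classical.choose_spec hx
  have hFreg : ∀ x ∈ OmegaLim α, ∀ n, F x n < x := by
    intro x hx n
    obtain ⟨hmono, hlub⟩ := hFs x hx
    exact lt_of_lt_of_le (hmono (Nat.lt_succ_self n)) (hlub.1 ⟨n + 1, rfl⟩)
  -- key claim
  have hclaim : ∃ n : ℕ, ∀ η : α, IsStatIn {x ∈ OmegaLim α | η < F x n} := by
    by_contra h
    push_neg at h
    choose η hη using h
    choose c hc1 hc2 using fun n => nonstat_club (hη n)
    -- bound the η's
    obtain ⟨b, hb⟩ := small_bddAbove hunc hreg hinit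
      (s := Set.range η) (mk_range_nat_lt hunc hreg hinit η)
    -- the club
    have hC : IsClubIn ((⋂ n : ULift.{u} ℕ, c n.down) ∩ Set.Ioi b) := by
      refine clubIn_inter hunc hreg hinit
        (clubIn_iInter hunc hreg hinit _ (fun n => hc1 n.down)
          (lt_of_le_of_lt Cardinal.mk_le_aleph0 hunc)) ?_
      constructor
      · rintro s hs ⟨x0, hx0⟩ m hm
        exact lt_of_lt_of_le (hs hx0) (hm.1 hx0)
      · intro x
        obtain ⟨y, hy⟩ := no_max hunc hinit (max b x)
        exact ⟨y, lt_of_le_of_lt (le_max_left b x) hy, lt_of_le_of_lt (le_max_right b x) hy⟩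
    obtain ⟨x, hxW, hxC, hxb⟩ := stat_omegaLim hunc hreg hinit _ hC
    -- x ≤ b : contradiction with hxb
    have hxle : x ≤ b := by
      obtain ⟨hmono, hlub⟩ := hFs x hxW
      refine le_trans (hlub.2 ?_) le_rfl
      rintro _ ⟨n, rfl⟩
      have hxcn : x ∈ c n := by
        have := Set.mem_iInter.mp hxC ⟨n⟩
        exact this
      have hle : F x n ≤ η n := by
        by_contra hgt
        exact hc2 n x ⟨hxW, not_le.mp hgt⟩ hxcn
      exact le_trans hle (hb ⟨n, rfl⟩)
    exact absurd hxb (not_lt.mpr hxle)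
  obtain ⟨n, hn⟩ := hclaim
  set g : α → α := fun x => F x n with hgdef
  -- V : set of values i such that the fiber is stationary
  set V : Set α := {i | IsStatIn {x ∈ OmegaLim α | g x = i}} with hV
  have hVunb : ∀ η : α, ∃ i ∈ V, η < i := by
    intro η
    have hstat : IsStatIn {x ∈ OmegaLim α | η < g x} := hn η
    obtain ⟨i, hi⟩ := fodor hunc hreg hinit hstat g
      (fun x hx => hFreg x hx.1 n)
    have hisub : {x ∈ {x ∈ OmegaLim α | η < g x} | g x = i} ⊆ {x ∈ OmegaLim α | g x = i} :=
      fun x hx => ⟨hx.1.1, hx.2⟩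
    refine ⟨i, stat_mono hisub hi, ?_⟩
    obtain ⟨x0, hx0, _⟩ := hi Set.univ ⟨fun _ _ _ _ _ => trivial, fun a => by
      obtain ⟨y, hy⟩ := no_max hunc hinit a; exact ⟨y, trivial, hy⟩⟩
    rw [← hx0.2]
    exact hx0.1.2
  have hVcard : #α ≤ #V := by
    by_contra hlt
    obtain ⟨b, hb⟩ := small_bddAbove hunc hreg hinit (not_le.mp hlt)
    obtain ⟨i, hiV, hbi⟩ := hVunb b
    exact absurd (hb hiV) (not_le.mpr hbi)
  obtain ⟨φ⟩ := (Cardinal.le_def α V).mp hVcard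
  refine ⟨fun i => {x ∈ OmegaLim α | g x = (φ i : α)}, fun i => (φ i).2, ?_⟩
  intro i j hij x hxi hxj
  apply hij
  have : (φ i : α) = (φ j : α) := by rw [← hxi.2, ← hxj.2]
  exact φ.injective (Subtype.ext this)

end Main


/-- For every regular uncountable cardinal `κ`, both the stationary pseudo-intersection number
`p^cl_κ` and the stationary tower number `t^cl_κ` equal `κ`:
there is a `⊇*_cl`-well-ordered (i.e. `⊇*_cl`-decreasing, `κ`-indexed, injective) family of
`κ` many stationary sets with the `<κ`-stationary intersection property and no stationary
pseudo-intersection, while every family of fewer than `κ` stationary sets with the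
`<κ`-stationary intersection property has a stationary pseudo-intersection.
Here `κ` is represented as a well-ordered type `α` of regular uncountable cardinality
all of whose proper initial segments are of size `< #α`. -/
theorem statTower_and_statPseudoInter_number_eq {α : Type*} [LinearOrder α] [WellFoundedLT α]
    (hreg : (#α).IsRegular) (hunc : ℵ₀ < #α)
    (hinit : ∀ a : α, #(Set.Iio a) < #α) :
    (∃ x : α → Set α, Function.Injective x ∧ (∀ i, IsStatIn (x i)) ∧
      (∀ i j : α, i ≤ j → AlmostSubsetCl (x j) (x i)) ∧
      (∀ s : Set α, #s < #α → IsStatIn (⋂ i ∈ s, x i)) ∧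
      ¬ ∃ z : Set α, IsStatPseudoInter (Set.range x) z) ∧
    (∀ F : Set (Set α), #F < #α → (∀ y ∈ F, IsStatIn y) →
      (∀ F' ⊆ F, #F' < #α → IsStatIn (⋂₀ F')) →
      ∃ z : Set α, IsStatPseudoInter F z) := by
  classical
  have hne : Nonempty α := by
    by_contra hne
    rw [not_nonempty_iff] at hne
    rw [Cardinal.mk_eq_zero α] at hunc
    exact absurd hunc (by simp [not_lt])
  obtain ⟨a0⟩ := hne
  -- minimum element
  obtain ⟨m0, -, hm0min⟩ := (IsWellFounded.wf (r := (· < · : α → α → Prop))).has_min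
    Set.univ ⟨a0, trivial⟩
  have hm0 : ∀ b : α, m0 ≤ b := fun b => not_lt.mp (hm0min b trivial)
  have hemptyNS : ¬ IsStatIn (∅ : Set α) :=
    bounded_nonstat hunc hinit (a := m0) (Set.empty_subset _)
  constructor
  · -- the tower
    obtain ⟨S, hSstat, hSdisj⟩ := solovay hunc hreg hinit
    obtain ⟨a1, ha1⟩ := no_max hunc hinit m0
    set T : α → Set α := fun i =>
      if i = m0 then {x | x ≠ m0 ∧ ∀ j, j ≠ m0 → x ∉ S j \ Set.Iic (max j a1)}
      else S i \ Set.Iic (max i a1) with hT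
    have hTstat : ∀ i, i ≠ m0 → IsStatIn (T i) := by
      intro i hi
      rw [hT]; simp only [if_neg hi]
      exact stat_diff_Iic hunc hinit (hSstat i) _
    have hTreg : ∀ i x, x ∈ T i → i < x := by
      intro i x hx
      by_cases hi : i = m0
      · rw [hT] at hx; simp only [hi, if_pos rfl] at hx
        subst hi
        exact lt_of_le_of_ne (hm0 x) (Ne.symm hx.1)
      · rw [hT] at hx; simp only [if_neg hi] at hx
        exact lt_of_le_of_lt (le_max_left i a1) (not_le.mp hx.2)
    have hTdisj : ∀ i j, i ≠ j → ∀ x, x ∈ T i → x ∉ T j := by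
      intro i j hij x hxi hxj
      by_cases hi : i = m0
      · have hj : j ≠ m0 := fun h => hij (hi.trans h.symm)
        rw [hT] at hxi hxj
        simp only [hi, if_pos rfl] at hxi
        simp only [if_neg hj] at hxj
        exact hxi.2 j hj hxj
      · by_cases hj : j = m0
        · rw [hT] at hxi hxj
          simp only [hj, if_pos rfl] at hxj
          simp only [if_neg hi] at hxi
          exact hxj.2 i hi hxi
        · rw [hT] at hxi hxj
          simp only [if_neg hi] at hxi
          simp only [if_neg hj] at hxj
          exact hSdisj i j hij x hxi.1 hxj.1
    have hTcov : ∀ x : α, x ≠ m0 → ∃ i, x ∈ T i := by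
      intro x hx
      by_cases h : ∃ j, j ≠ m0 ∧ x ∈ S j \ Set.Iic (max j a1)
      · obtain ⟨j, hj1, hj2⟩ := h
        exact ⟨j, by rw [hT]; simp only [if_neg hj1]; exact hj2⟩
      · push_neg at h
        refine ⟨m0, by rw [hT]; simp only [if_pos rfl]; exact ⟨hx, fun j hj => h j hj⟩⟩
    have hTne : ∀ i, (T i).Nonempty := by
      intro i
      by_cases hi : i = m0
      · refine ⟨a1, ?_⟩
        rw [hi, hT]; simp only [if_pos rfl]
        refine ⟨ne_of_gt ha1, fun j hj hmem => ?_⟩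
        exact hmem.2 (le_max_right j a1)
      · obtain ⟨y, hy, -⟩ := hTstat i hi Set.univ (clubIn_univ hunc hinit)
        exact ⟨y, hy⟩
    -- the tower
    set x : α → Set α := fun j => {y | ∀ i, i < j → y ∉ T i} with hx
    have hxmono : ∀ i j : α, i ≤ j → x j ⊆ x i := by
      intro i j hij y hy i' hi'
      exact hy i' (lt_of_lt_of_le hi' hij)
    have hTsub : ∀ j b : α, j ≤ b → T b ⊆ x j := by
      intro j b hjb y hy i hi
      exact fun hyi => hTdisj i b (ne_of_lt (lt_of_lt_of_le hi hjb)) y hyi hy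
    have hxstat : ∀ j, IsStatIn (x j) := by
      intro j
      have hb : max j a1 ≠ m0 := by
        intro h
        have h2 : a1 ≤ m0 := h ▸ le_max_right j a1
        exact absurd ha1 (not_lt.mpr h2)
      exact stat_mono (hTsub j (max j a1) (le_max_left j a1)) (hTstat _ hb)
    refine ⟨x, ?_, hxstat, ?_, ?_, ?_⟩
    · -- injective
      intro j j' hjj'
      by_contra hne'
      rcases lt_or_gt_of_ne hne' with h | h
      · obtain ⟨y, hy⟩ := hTne j
        have hy1 : y ∈ x j := hTsub j j le_rfl hy
        have hy2 : y ∉ x j' := fun hmem => hmem j h hy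
        rw [hjj'] at hy1; exact hy2 hy1
      · obtain ⟨y, hy⟩ := hTne j'
        have hy1 : y ∈ x j' := hTsub j' j' le_rfl hy
        have hy2 : y ∉ x j := fun hmem => hmem j' h hy
        rw [← hjj'] at hy1; exact hy2 hy1
    · -- almost subset
      intro i j hij
      have : x j \ x i = ∅ := by
        rw [Set.diff_eq_empty]
        exact hxmono i j hij
      rw [AlmostSubsetCl, this]
      exact hemptyNS
    · -- small intersections
      intro s hs
      obtain ⟨b, hb⟩ := small_bddAbove hunc hreg hinit hs
      refine stat_mono ?_ (hxstat b)
      intro y hy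
      refine Set.mem_iInter₂.mpr fun j hj => ?_
      intro i hi
      exact hy i (lt_of_lt_of_le hi (hb hj))
    · -- no pseudo-intersection
      rintro ⟨z, hz1, hz2⟩
      have hzi : ∀ i, ¬ IsStatIn (z ∩ T i) := by
        intro i
        obtain ⟨j, hij⟩ := no_max hunc hinit i
        have h := hz2 (x j) ⟨j, rfl⟩
        refine nonstat_mono ?_ h
        intro y hy
        exact ⟨hy.1, fun hmem => hmem i hij hy.2⟩
      choose c hc1 hc2 using fun i => nonstat_club (hzi i)
      have hD : IsClubIn ((diagInter c) ∩ Set.Ioi m0) :=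
        clubIn_inter hunc hreg hinit (clubIn_diagInter hunc hreg hinit c hc1)
          (clubIn_Ioi hunc hinit m0)
      obtain ⟨y, hyz, hyD, hym0⟩ := hz1 _ hD
      obtain ⟨i, hyT⟩ := hTcov y (ne_of_gt hym0)
      have hiy : i < y := hTreg i y hyT
      exact hc2 i y ⟨hyz, hyT⟩ (hyD i hiy)
  · -- pseudo-intersection for small families
    intro F hF hFstat hFinter
    refine ⟨⋂₀ F, hFinter F Set.Subset.rfl hF, fun y hy => ?_⟩
    have : ⋂₀ F \ y = ∅ := by
      rw [Set.diff_eq_empty]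
      exact Set.sInter_subset_of_mem hy
    rw [AlmostSubsetCl, this]
    exact hemptyNS
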